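/- In the space X_N = span{f_1,…,f_{2N−1}} with norm ‖(a_i)‖ = max{(Σ_{i=1}^{2N−1}|a_i|²)^{1/2}, sup_{N≤m≤2N−1}|Σ_{i=N}^m a_i/√(i−N+1)|}, one has ‖Σ_{i=N}^{2N−1} f_i/√(i−N+1)‖ = Σ_{i=1}^N 1/i, while ‖Σ_{i=N}^{2N−1} (−1)^i f_i/√(i−N+1)‖ = (Σ_{i=1}^N 1/i)^{1/2}. Consequently the ratio of these two norms tends to infinity as N → ∞. -/

import Mathlib

/-- The norm of the Konyagin–Temlyakov `(2N−1)`-dimensional space `X_N`,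
evaluated on a vector `a` (regarded as supported on coordinates `1, …, 2N−1`):
`‖a‖ = max{(∑_{i=1}^{2N−1} a_i²)^{1/2}, sup_{N ≤ m ≤ 2N−1} |∑_{i=N}^m a_i/√(i−N+1)|}`. -/
noncomputable def XNnorm (N : ℕ) (a : ℕ → ℝ) : ℝ :=
  max (Real.sqrt (∑ i ∈ Finset.Icc 1 (2 * N - 1), (a i) ^ 2))
    (sSup {r : ℝ | ∃ m ∈ Finset.Icc N (2 * N - 1),
      r = |∑ i ∈ Finset.Icc N m, a i / Real.sqrt (i - N + 1)|})

/-- The vector `∑_{i=N}^{2N−1} f_i/√(i−N+1)` in `X_N`. -/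
noncomputable def ktPos (N : ℕ) : ℕ → ℝ := fun i =>
  if i ∈ Finset.Icc N (2 * N - 1) then (Real.sqrt (i - N + 1))⁻¹ else 0

/-- The vector `∑_{i=N}^{2N−1} (−1)^i f_i/√(i−N+1)` in `X_N`. -/
noncomputable def ktAlt (N : ℕ) : ℕ → ℝ := fun i =>
  if i ∈ Finset.Icc N (2 * N - 1) then (-1 : ℝ) ^ i * (Real.sqrt (i - N + 1))⁻¹ else 0

/- ### Auxiliary lemmas -/

/-- Partial sums of the alternating harmonic series. -/
noncomputable def altS (j : ℕ) : ℝ := ∑ k ∈ Finset.range j, (-1:ℝ)^k / (k+1)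

lemma altS_bounds : ∀ j : ℕ, 0 ≤ altS j ∧ altS j ≤ 1 := by
  have key : ∀ j : ℕ, (0 ≤ altS j ∧ altS j ≤ 1) ∧
      (Even j → altS j ≤ 1 - 1/(j+1)) ∧ (Odd j → 1/(j+1) ≤ altS j) := by
    intro j
    induction j with
    | zero => simp [altS]
    | succ n ih =>
      obtain ⟨⟨h0, h1⟩, he, ho⟩ := ih
      have hstep : altS (n+1) = altS n + (-1:ℝ)^n / (n+1) := by
        simp [altS, Finset.sum_range_succ]
      have hpos : (0:ℝ) < (n:ℝ) + 1 := by positivity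
      have hmono : 1/((n:ℝ)+1+1) ≤ 1/((n:ℝ)+1) := by
        apply one_div_le_one_div_of_le <;> linarith
      rcases Nat.even_or_odd n with hev | hod
      · have hle := he hev
        have hsign : (-1:ℝ)^n = 1 := hev.neg_one_pow
        rw [hstep, hsign]
        have h1n : (0:ℝ) < 1/((n:ℝ)+1) := by positivity
        refine ⟨⟨by linarith, by linarith⟩, ?_, ?_⟩
        · intro h
          exact absurd hev (by simpa [Nat.even_add_one] using h)
        · intro _
          push_cast
          linarith
      · have hge := ho hod
        have hsign : (-1:ℝ)^n = -1 := hod.neg_one_pow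
        rw [hstep, hsign]
        have h1n : (0:ℝ) < 1/((n:ℝ)+1) := by positivity
        refine ⟨⟨by linarith [neg_div ((n:ℝ)+1) 1], ?_⟩, ?_, ?_⟩
        · have : (-1:ℝ)/((n:ℝ)+1) ≤ 0 := by
            rw [neg_div]; linarith
          linarith
        · intro _
          push_cast
          rw [neg_div]
          linarith
        · intro h
          exact absurd hod (by simpa [Nat.even_add_one, parity_simps] using h)
  exact fun j => (key j).1

lemma harm_eq_range (N : ℕ) :
    ∑ i ∈ Finset.Icc 1 N, (1:ℝ)/i = ∑ k ∈ Finset.range N, (1:ℝ)/(k+1) := by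
  rw [← Finset.Ico_add_one_right_eq_Icc, Finset.sum_Ico_eq_sum_range]
  simp [add_comm 1]

lemma mem_window (N : ℕ) (hN : 1 ≤ N) {k : ℕ} (hk : k < N) :
    N + k ∈ Finset.Icc N (2*N-1) := by
  simp only [Finset.mem_Icc]
  omega

lemma cast_shift (N k : ℕ) : ((N + k : ℕ) : ℝ) - N + 1 = (k:ℝ) + 1 := by push_cast; ring

lemma pos_partial (N : ℕ) (hN : 1 ≤ N) {m : ℕ} (hm : m ∈ Finset.Icc N (2*N-1)) :
    ∑ i ∈ Finset.Icc N m, ktPos N i / Real.sqrt (i - N + 1)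
      = ∑ k ∈ Finset.range (m + 1 - N), (1:ℝ)/(k+1) := by
  rw [← Finset.Ico_add_one_right_eq_Icc, Finset.sum_Ico_eq_sum_range]
  simp only [Finset.mem_Icc] at hm
  apply Finset.sum_congr rfl
  intro k hk
  simp only [Finset.mem_range] at hk
  have hk' : k < N := by omega
  have hmem := mem_window N hN hk'
  rw [ktPos, if_pos hmem, cast_shift]
  have h1 : (0:ℝ) ≤ (k:ℝ) + 1 := by positivity
  rw [div_eq_mul_inv, ← mul_inv, Real.mul_self_sqrt h1, one_div]

lemma alt_partial (N : ℕ) (hN : 1 ≤ N) {m : ℕ} (hm : m ∈ Finset.Icc N (2*N-1)) :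
    ∑ i ∈ Finset.Icc N m, ktAlt N i / Real.sqrt (i - N + 1)
      = (-1:ℝ)^N * altS (m + 1 - N) := by
  rw [altS, ← Finset.Ico_add_one_right_eq_Icc, Finset.sum_Ico_eq_sum_range, Finset.mul_sum]
  simp only [Finset.mem_Icc] at hm
  apply Finset.sum_congr rfl
  intro k hk
  simp only [Finset.mem_range] at hk
  have hk' : k < N := by omega
  have hmem := mem_window N hN hk'
  rw [ktAlt, if_pos hmem, cast_shift]
  have h1 : (0:ℝ) ≤ (k:ℝ) + 1 := by positivity
  have hne : Real.sqrt ((k:ℝ)+1) ≠ 0 := by positivity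
  rw [pow_add]
  field_simp [Real.mul_self_sqrt h1]
  rw [Real.sq_sqrt h1]

lemma sum_sq_pos (N : ℕ) (hN : 1 ≤ N) :
    ∑ i ∈ Finset.Icc 1 (2*N-1), (ktPos N i)^2 = ∑ i ∈ Finset.Icc 1 N, (1:ℝ)/i := by
  rw [harm_eq_range]
  rw [← Finset.sum_subset (Finset.Icc_subset_Icc (by omega) le_rfl :
        Finset.Icc N (2*N-1) ⊆ Finset.Icc 1 (2*N-1))
      (by intro x _ hx; rw [ktPos, if_neg hx]; ring)]
  rw [← Finset.Ico_add_one_right_eq_Icc, Finset.sum_Ico_eq_sum_range]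
  have hcard : 2*N - 1 + 1 - N = N := by omega
  rw [hcard]
  apply Finset.sum_congr rfl
  intro k hk
  simp only [Finset.mem_range] at hk
  have hmem := mem_window N hN hk
  rw [ktPos, if_pos hmem, cast_shift]
  have h1 : (0:ℝ) ≤ (k:ℝ) + 1 := by positivity
  rw [inv_pow, Real.sq_sqrt h1, one_div]

lemma sum_sq_alt (N : ℕ) (hN : 1 ≤ N) :
    ∑ i ∈ Finset.Icc 1 (2*N-1), (ktAlt N i)^2 = ∑ i ∈ Finset.Icc 1 N, (1:ℝ)/i := by
  rw [← sum_sq_pos N hN]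
  apply Finset.sum_congr rfl
  intro i _
  rw [ktAlt, ktPos]
  split_ifs with h
  · rw [mul_pow, ← pow_mul, mul_comm i 2, pow_mul, neg_one_sq, one_pow, one_mul]
  · rfl

lemma one_le_harm (N : ℕ) (hN : 1 ≤ N) : 1 ≤ ∑ i ∈ Finset.Icc 1 N, (1:ℝ)/i := by
  rw [harm_eq_range]
  have h0 : (0:ℕ) ∈ Finset.range N := Finset.mem_range.mpr hN
  have := Finset.single_le_sum (f := fun k : ℕ => (1:ℝ)/(k+1))
    (fun i _ => by positivity) h0
  simpa using this

lemma range_sum_le (j N : ℕ) (h : j ≤ N) :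
    ∑ k ∈ Finset.range j, (1:ℝ)/(k+1) ≤ ∑ k ∈ Finset.range N, (1:ℝ)/(k+1) :=
  Finset.sum_le_sum_of_subset_of_nonneg (Finset.range_subset_range.mpr h)
    (fun i _ _ => by positivity)

lemma pos_norm (N : ℕ) (hN : 1 ≤ N) :
    XNnorm N (ktPos N) = ∑ i ∈ Finset.Icc 1 N, (1:ℝ)/i := by
  set H : ℝ := ∑ i ∈ Finset.Icc 1 N, (1:ℝ)/i with hH
  have hH1 : 1 ≤ H := one_le_harm N hN
  have hmN : 2*N - 1 ∈ Finset.Icc N (2*N-1) := by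
    simp only [Finset.mem_Icc]; omega
  have hub : ∀ r ∈ {r : ℝ | ∃ m ∈ Finset.Icc N (2 * N - 1),
      r = |∑ i ∈ Finset.Icc N m, ktPos N i / Real.sqrt (i - N + 1)|}, r ≤ H := by
    rintro r ⟨m, hm, rfl⟩
    rw [pos_partial N hN hm]
    have hnn : (0:ℝ) ≤ ∑ k ∈ Finset.range (m + 1 - N), (1:ℝ)/(k+1) := by positivity
    rw [abs_of_nonneg hnn, hH, harm_eq_range]
    apply range_sum_le
    simp only [Finset.mem_Icc] at hm
    omega
  have hmem : H ∈ {r : ℝ | ∃ m ∈ Finset.Icc N (2 * N - 1),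
      r = |∑ i ∈ Finset.Icc N m, ktPos N i / Real.sqrt (i - N + 1)|} := by
    refine ⟨2*N - 1, hmN, ?_⟩
    rw [pos_partial N hN hmN]
    have hcard : 2*N - 1 + 1 - N = N := by omega
    rw [hcard]
    have hnn : (0:ℝ) ≤ ∑ k ∈ Finset.range N, (1:ℝ)/(k+1) := by positivity
    rw [abs_of_nonneg hnn, hH, harm_eq_range]
  have hsup : sSup {r : ℝ | ∃ m ∈ Finset.Icc N (2 * N - 1),
      r = |∑ i ∈ Finset.Icc N m, ktPos N i / Real.sqrt (i - N + 1)|} = H :=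
    le_antisymm (csSup_le ⟨H, hmem⟩ hub) (le_csSup ⟨H, hub⟩ hmem)
  rw [XNnorm, sum_sq_pos N hN, ← hH, hsup, max_eq_right]
  calc Real.sqrt H ≤ Real.sqrt (H * H) := Real.sqrt_le_sqrt (by nlinarith)
    _ = H := Real.sqrt_mul_self (by linarith)

lemma alt_norm (N : ℕ) (hN : 1 ≤ N) :
    XNnorm N (ktAlt N) = Real.sqrt (∑ i ∈ Finset.Icc 1 N, (1:ℝ)/i) := by
  set H : ℝ := ∑ i ∈ Finset.Icc 1 N, (1:ℝ)/i with hH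
  have hH1 : 1 ≤ H := one_le_harm N hN
  have hsq1 : 1 ≤ Real.sqrt H := by
    rw [show (1:ℝ) = Real.sqrt 1 from (Real.sqrt_one).symm]
    exact Real.sqrt_le_sqrt hH1
  have hmN : N ∈ Finset.Icc N (2*N-1) := by
    simp only [Finset.mem_Icc]; omega
  rw [XNnorm, sum_sq_alt N hN, ← hH, max_eq_left]
  apply csSup_le
  · exact ⟨_, N, hmN, rfl⟩
  · rintro r ⟨m, hm, rfl⟩
    rw [alt_partial N hN hm, abs_mul, abs_pow, abs_neg, abs_one, one_pow, one_mul]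
    obtain ⟨ha0, ha1⟩ := altS_bounds (m + 1 - N)
    rw [abs_of_nonneg ha0]
    linarith

theorem stmt11 :
    (∀ N : ℕ, 1 ≤ N →
      XNnorm N (ktPos N) = ∑ i ∈ Finset.Icc 1 N, (1 : ℝ) / i ∧
      XNnorm N (ktAlt N) = Real.sqrt (∑ i ∈ Finset.Icc 1 N, (1 : ℝ) / i)) ∧
    Filter.Tendsto (fun N : ℕ => XNnorm N (ktPos N) / XNnorm N (ktAlt N))
      Filter.atTop Filter.atTop := by
  constructor
  · exact fun N hN => ⟨pos_norm N hN, alt_norm N hN⟩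
  · have hharm : Filter.Tendsto (fun N : ℕ => ∑ i ∈ Finset.Icc 1 N, (1:ℝ)/i)
        Filter.atTop Filter.atTop := by
      have := Real.tendsto_sum_range_one_div_nat_succ_atTop
      apply this.congr
      intro n
      rw [harm_eq_range]
    have hsqrt : Filter.Tendsto Real.sqrt Filter.atTop Filter.atTop := by
      rw [Filter.tendsto_atTop_atTop]
      intro b
      refine ⟨b^2, fun a ha => ?_⟩
      rcases le_or_gt b 0 with hb | hb
      · exact hb.trans (Real.sqrt_nonneg a)
      · calc b = Real.sqrt (b^2) := (Real.sqrt_sq hb.le).symm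
          _ ≤ Real.sqrt a := Real.sqrt_le_sqrt ha
    refine ((hsqrt.comp hharm).congr' ?_)
    filter_upwards [Filter.eventually_ge_atTop 1] with N hN
    set H : ℝ := ∑ i ∈ Finset.Icc 1 N, (1:ℝ)/i with hH
    have hH1 : 1 ≤ H := one_le_harm N hN
    have hsqpos : 0 < Real.sqrt H := Real.sqrt_pos.mpr (by linarith)
    rw [Function.comp_apply, pos_norm N hN, alt_norm N hN, ← hH,
      eq_div_iff (ne_of_gt hsqpos), Real.mul_self_sqrt (by linarith)]
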